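/- Let (Ω, F, P) be a probability space, let I ⊆ ℕ^d be a finite nonempty set, and for each ℓ ∈ I let N_ℓ be a positive integer. Suppose the real random variables (Y_{ℓ,n})_{ℓ ∈ I, 0 ≤ n < N_ℓ} are jointly independent and square-integrable, with E[Y_{ℓ,n}] = μ_ℓ and Var[Y_{ℓ,n}] = V_ℓ for all n. Suppose further that (μ_ℓ)_{ℓ ∈ ℕ^d} is an absolutely summable family (extending μ to all of ℕ^d) with sum S = Σ_{ℓ ∈ ℕ^d} μ_ℓ. Then the Multi-Index Monte Carlo estimator Q = Σ_{ℓ ∈ I} (1/N_ℓ) Σ_{n=0}^{N_ℓ−1} Y_{ℓ,n} has mean square error E[(Q − S)²] = Σ_{ℓ ∈ I} V_ℓ / N_ℓ + (Σ_{ℓ ∉ I} μ_ℓ)². -/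

import Mathlib

open MeasureTheory ProbabilityTheory

/-- Mean square error decomposition of the Multi-Index Monte Carlo estimator: if the
samples `Y ℓ n` (`ℓ ∈ I`, `0 ≤ n < N ℓ`) are jointly independent, square-integrable, with
mean `μ ℓ` and variance `V ℓ`, and `(μ ℓ)_{ℓ ∈ ℕ^d}` is absolutely summable with sum `S`,
then `E[(Q - S)²] = Σ_{ℓ ∈ I} V ℓ / N ℓ + (Σ_{ℓ ∉ I} μ ℓ)²` for the estimator
`Q = Σ_{ℓ ∈ I} (1/N_ℓ) Σ_{n < N_ℓ} Y_{ℓ,n}`. -/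
theorem mimc_estimator_mse
    {Ω : Type*} [MeasurableSpace Ω] (P : Measure Ω) [IsProbabilityMeasure P]
    (d : ℕ) (I : Finset (Fin d → ℕ)) (hI : I.Nonempty)
    (N : (Fin d → ℕ) → ℕ) (hN : ∀ ℓ ∈ I, 0 < N ℓ)
    (Y : (Fin d → ℕ) → ℕ → Ω → ℝ) (μ V : (Fin d → ℕ) → ℝ)
    (hindep : iIndepFun
      (fun p : (Σ ℓ : {x // x ∈ I}, Fin (N ℓ.1)) => Y p.1 p.2) P)
    (hL2 : ∀ ℓ ∈ I, ∀ n < N ℓ, MemLp (Y ℓ n) 2 P)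
    (hmean : ∀ ℓ ∈ I, ∀ n < N ℓ, (∫ ω, Y ℓ n ω ∂P) = μ ℓ)
    (hvar : ∀ ℓ ∈ I, ∀ n < N ℓ, variance (Y ℓ n) P = V ℓ)
    (hsum : Summable fun ℓ : Fin d → ℕ => |μ ℓ|)
    (S : ℝ) (hS : S = ∑' ℓ : Fin d → ℕ, μ ℓ) :
    ∫ ω, ((∑ ℓ ∈ I, (1 / (N ℓ : ℝ)) * ∑ n ∈ Finset.range (N ℓ), Y ℓ n ω) - S) ^ 2 ∂P
      = (∑ ℓ ∈ I, V ℓ / (N ℓ : ℝ))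
        + (∑' ℓ : {ℓ : Fin d → ℕ // ℓ ∉ I}, μ ℓ.1) ^ 2 := by
  classical
  set X : (Σ ℓ : {x // x ∈ I}, Fin (N ℓ.1)) → Ω → ℝ :=
    fun p ω => (1 / (N p.1.1 : ℝ)) * Y p.1.1 p.2 ω with hXdef
  set Q : Ω → ℝ := ∑ p, X p with hQdef
  have hQeq : ∀ ω, (∑ ℓ ∈ I, (1 / (N ℓ : ℝ)) * ∑ n ∈ Finset.range (N ℓ), Y ℓ n ω) = Q ω := by
    intro ω
    rw [hQdef, Finset.sum_apply, ← Finset.sum_coe_sort I, ← Finset.univ_sigma_univ,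
      Finset.sum_sigma]
    refine Finset.sum_congr rfl fun ℓ _ => ?_
    rw [Finset.mul_sum, ← Fin.sum_univ_eq_sum_range]
  -- square integrability
  have hXL2 : ∀ p : (Σ ℓ : {x // x ∈ I}, Fin (N ℓ.1)), MemLp (X p) 2 P := by
    intro p
    exact (hL2 p.1.1 p.1.2 p.2 p.2.isLt).const_mul _
  have hQL2 : MemLp Q 2 P := memLp_finset_sum' _ fun p _ => hXL2 p
  -- variance of the estimator
  have hpair : Set.Pairwise ↑(Finset.univ : Finset (Σ ℓ : {x // x ∈ I}, Fin (N ℓ.1)))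
      fun i j => IndepFun (X i) (X j) P := by
    intro i _ j _ hij
    exact (hindep.indepFun hij).comp (measurable_id.const_mul _) (measurable_id.const_mul _)
  have hvarQ : variance Q P = ∑ ℓ ∈ I, V ℓ / (N ℓ : ℝ) := by
    rw [hQdef, IndepFun.variance_sum (fun p _ => hXL2 p) hpair]
    have : ∀ p : (Σ ℓ : {x // x ∈ I}, Fin (N ℓ.1)),
        variance (X p) P = (1 / (N p.1.1 : ℝ)) ^ 2 * V p.1.1 := by
      intro p
      rw [hXdef, variance_const_mul, hvar p.1.1 p.1.2 p.2 p.2.isLt]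
    simp_rw [this]
    rw [← Finset.univ_sigma_univ, Finset.sum_sigma, ← Finset.sum_coe_sort I
      (fun ℓ => V ℓ / (N ℓ : ℝ))]
    refine Finset.sum_congr rfl fun ℓ _ => ?_
    simp only [Finset.sum_const, Finset.card_univ, Fintype.card_fin, nsmul_eq_mul]
    have hNpos : (0 : ℝ) < (N ℓ.1 : ℝ) := by exact_mod_cast hN ℓ.1 ℓ.2
    field_simp
  -- mean of the estimator
  have hXint : ∀ p : (Σ ℓ : {x // x ∈ I}, Fin (N ℓ.1)), Integrable (X p) P :=
    fun p => (hXL2 p).integrable one_le_two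
  have hQint : Integrable Q P := by
    rw [hQdef]; exact integrable_finset_sum' _ fun p _ => hXint p
  have hEQ : ∫ ω, Q ω ∂P = ∑ ℓ ∈ I, μ ℓ := by
    rw [hQdef]
    have : ∫ ω, (∑ p, X p) ω ∂P = ∑ p, ∫ ω, X p ω ∂P := by
      simp_rw [Finset.sum_apply]
      exact integral_finset_sum _ fun p _ => hXint p
    rw [this]
    have hXmean : ∀ p : (Σ ℓ : {x // x ∈ I}, Fin (N ℓ.1)),
        ∫ ω, X p ω ∂P = (1 / (N p.1.1 : ℝ)) * μ p.1.1 := by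
      intro p
      rw [hXdef]
      simp only
      rw [integral_const_mul, hmean p.1.1 p.1.2 p.2 p.2.isLt]
    simp_rw [hXmean]
    rw [← Finset.univ_sigma_univ, Finset.sum_sigma, ← Finset.sum_coe_sort I μ]
    refine Finset.sum_congr rfl fun ℓ _ => ?_
    simp only [Finset.sum_const, Finset.card_univ, Fintype.card_fin, nsmul_eq_mul]
    have hNpos : (0 : ℝ) < (N ℓ.1 : ℝ) := by exact_mod_cast hN ℓ.1 ℓ.2
    field_simp
  -- the shifted variable
  set Z : Ω → ℝ := fun ω => Q ω - S with hZdef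
  have hZL2 : MemLp Z 2 P := hQL2.sub (memLp_const S)
  have hEZ : ∫ ω, Z ω ∂P = (∫ ω, Q ω ∂P) - S := by
    rw [hZdef]
    simp only
    rw [integral_sub hQint (integrable_const S), integral_const]
    simp
  have hvshift : variance Z P = variance Q P := by
    rw [variance_eq_integral hZL2.aemeasurable, variance_eq_integral hQL2.aemeasurable]
    congr 1
    funext ω
    rw [hEZ]
    simp only [Pi.pow_apply, Pi.sub_apply, hZdef]
    ring
  -- bias identity
  have hμsum : Summable μ := summable_abs_iff.mp hsum
  have hbias : (∫ ω, Z ω ∂P) = -(∑' ℓ : {ℓ : Fin d → ℕ // ℓ ∉ I}, μ ℓ.1) := by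
    have hcompl : (∑ ℓ ∈ I, μ ℓ) + ∑' x : ↑((I : Set (Fin d → ℕ))ᶜ), μ x
        = ∑' x, μ x := Summable.sum_add_tsum_compl hμsum
    have hsub : (∑' x : ↑((I : Set (Fin d → ℕ))ᶜ), μ x)
        = ∑' ℓ : {ℓ : Fin d → ℕ // ℓ ∉ I}, μ ℓ.1 := rfl
    rw [hEZ, hEQ, hS, ← hcompl, hsub]
    ring
  -- put things together
  have hmse := variance_eq_sub hZL2
  have hint : ∫ ω, ((∑ ℓ ∈ I, (1 / (N ℓ : ℝ)) * ∑ n ∈ Finset.range (N ℓ), Y ℓ n ω) - S) ^ 2 ∂P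
      = ∫ ω, (Z ^ 2) ω ∂P := by
    refine integral_congr_ae (Filter.Eventually.of_forall fun ω => ?_)
    simp only [hZdef, Pi.pow_apply]
    rw [hQeq ω]
  rw [hint]
  have : ∫ ω, (Z ^ 2) ω ∂P = variance Z P + (∫ ω, Z ω ∂P) ^ 2 := by
    rw [hmse]; ring
  rw [this, hvshift, hvarQ, hbias]
  ring
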